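/- In Fourier space, the improved Dirac operator zero condition: D̃² = Σ_μ Δ̃_μ Δ̃_μᵀ with Δ̃_μ = R_μ^{-1}Δ_μ and R_μ invertible vanishes on a momentum mode only when all free forward difference operators Δ_μ vanish, i.e., only at zero momentum; hence there are no fermion doublers. -/

import Mathlib

/-- In momentum space, Δ_μ acts as multiplication by (e^{iap_μ} - 1)/a and the improved
Dirac operator satisfies D̃² = Σ_μ |R_μ⁻¹ (e^{iap_μ}-1)/a|² with R_μ invertible; so D̃²
vanishes on a momentum mode only when e^{iap_μ} = 1 for both μ, i.e. only at zero momentum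
(mod 2π/a): there are no fermion doublers. -/
theorem no_fermion_doublers (a : ℝ) (ha : 0 < a) (Lc : ℕ) (hL : 0 < Lc)
    (k : Fin 2 → ℤ) (p : Fin 2 → ℝ)
    (hp : ∀ μ, p μ = 2 * Real.pi * (k μ : ℝ) / (a * (Lc : ℝ)))
    (R : Fin 2 → ℂ) (hR : ∀ μ, R μ ≠ 0)
    (hzero : ∑ μ : Fin 2,
        (‖(R μ)⁻¹ * ((Complex.exp (Complex.I * (a * p μ)) - 1) / (a : ℂ))‖) ^ 2
      = 0) :
    ∀ μ, Complex.exp (Complex.I * (a * p μ)) = 1 ∧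
      ∃ m : ℤ, p μ = 2 * Real.pi * (m : ℝ) / a := by
  intro μ
  have hterm : (‖(R μ)⁻¹ *
      ((Complex.exp (Complex.I * (a * p μ)) - 1) / (a : ℂ))‖) ^ 2 = 0 := by
    have := Finset.sum_eq_zero_iff_of_nonneg
      (fun i _ => sq_nonneg (‖(R i)⁻¹ *
        ((Complex.exp (Complex.I * (a * p i)) - 1) / (a : ℂ))‖)) |>.mp hzero
    exact this μ (Finset.mem_univ μ)
  have habs : (R μ)⁻¹ * ((Complex.exp (Complex.I * (a * p μ)) - 1) / (a : ℂ)) = 0 := by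
    have := pow_eq_zero_iff (n := 2) (by norm_num) |>.mp hterm
    exact norm_eq_zero.mp this
  have ha' : (a : ℂ) ≠ 0 := Complex.ofReal_ne_zero.mpr ha.ne'
  have hexp : Complex.exp (Complex.I * (a * p μ)) = 1 := by
    rcases mul_eq_zero.mp habs with h | h
    · exact absurd (inv_eq_zero.mp h) (hR μ)
    · have := (div_eq_zero_iff.mp h).resolve_right ha'
      exact sub_eq_zero.mp this
  refine ⟨hexp, ?_⟩
  rw [Complex.exp_eq_one_iff] at hexp
  obtain ⟨n, hn⟩ := hexp
  refine ⟨n, ?_⟩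
  have h1 : ((a * p μ : ℝ) : ℂ) = ((n * (2 * Real.pi) : ℝ) : ℂ) := by
    have := mul_left_cancel₀ Complex.I_ne_zero
      (hn.trans (by push_cast; ring) : Complex.I * ((a:ℂ) * (p μ)) = Complex.I * (((n * (2 * Real.pi) : ℝ)) : ℂ))
    exact_mod_cast this
  have h2 : a * p μ = n * (2 * Real.pi) := Complex.ofReal_injective h1
  field_simp
  linarith
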